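/- Define f : ℝ² → ℝ (ℝ² = EuclideanSpace ℝ (Fin 2), with coordinates x = (x₁, x₂)) by f(x) = |x₂|·√(x₁² + 1). Then at every point x with x₂ ≠ 0, f is differentiable, the Euclidean operator norm of its derivative satisfies ‖Df(x)‖² = (x₁² + 1) + x₁² x₂²/(x₁² + 1), and in particular ‖Df(x)‖ > |x₁|. -/

import Mathlib

/-- The function `f(x) = |x₂|·√(x₁² + 1)` on ℝ², i.e. the pointwise norm of the
1-form `ω = x₁x₂ dx₁ + x₂ dx₂` from Remark 2.2 of the paper. -/
noncomputable def katoF (x : EuclideanSpace ℝ (Fin 2)) : ℝ :=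
  |x 1| * Real.sqrt ((x 0) ^ 2 + 1)

/-- Remark 2.2 of the paper (counterexample to Kato's type inequality): at every
point with `x₂ ≠ 0`, `f(x) = |x₂|√(x₁² + 1)` is differentiable,
`‖Df(x)‖² = (x₁² + 1) + x₁²x₂²/(x₁² + 1)`, and in particular `‖Df(x)‖ > |x₁|`. -/
theorem stmt_19 :
    ∀ x : EuclideanSpace ℝ (Fin 2), x 1 ≠ 0 →
      DifferentiableAt ℝ katoF x ∧
      ‖fderiv ℝ katoF x‖ ^ 2 =
        ((x 0) ^ 2 + 1) + (x 0) ^ 2 * (x 1) ^ 2 / ((x 0) ^ 2 + 1) ∧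
      |x 0| < ‖fderiv ℝ katoF x‖ := by
  intro x hx
  have hs : (0:ℝ) < (x 0) ^ 2 + 1 := by positivity
  have hsq : (0:ℝ) < Real.sqrt ((x 0) ^ 2 + 1) := Real.sqrt_pos.2 hs
  set a : ℝ := |x 1| * (x 0 / Real.sqrt ((x 0)^2+1)) with ha
  set b : ℝ := (SignType.sign (x 1) : ℝ) * Real.sqrt ((x 0)^2+1) with hb
  set w : EuclideanSpace ℝ (Fin 2) := (WithLp.equiv 2 (Fin 2 → ℝ)).symm ![a, b] with hwdef
  -- derivative of y ↦ |y 1|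
  have h1 : HasFDerivAt (fun y : EuclideanSpace ℝ (Fin 2) => |y 1|)
      ((SignType.sign (x 1) : ℝ) • (EuclideanSpace.proj (1 : Fin 2) : EuclideanSpace ℝ (Fin 2) →L[ℝ] ℝ)) x := by
    have := (hasDerivAt_abs hx).comp_hasFDerivAt x
      ((EuclideanSpace.proj (1 : Fin 2) : EuclideanSpace ℝ (Fin 2) →L[ℝ] ℝ).hasFDerivAt (x := x))
    exact this
  -- derivative of y ↦ sqrt ((y 0)^2 + 1)
  have h2 : HasFDerivAt (fun y : EuclideanSpace ℝ (Fin 2) => Real.sqrt ((y 0)^2+1))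
      ((x 0 / Real.sqrt ((x 0)^2+1)) • (EuclideanSpace.proj (0 : Fin 2) : EuclideanSpace ℝ (Fin 2) →L[ℝ] ℝ)) x := by
    simp only [pow_two]
    have hp := ((EuclideanSpace.proj (0 : Fin 2) : EuclideanSpace ℝ (Fin 2) →L[ℝ] ℝ).hasFDerivAt (x := x))
    have hinner := (hp.mul hp).add_const 1
    have hne : x 0 * x 0 + 1 ≠ 0 := by nlinarith [sq_nonneg (x 0)]
    have hcomp := (Real.hasDerivAt_sqrt hne).comp_hasFDerivAt x hinner
    have hsq' : Real.sqrt (x 0 * x 0 + 1) ≠ 0 := by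
      have : (0:ℝ) < x 0 * x 0 + 1 := by nlinarith [sq_nonneg (x 0)]
      positivity
    refine hcomp.congr_fderiv ?_
    ext v
    simp
    field_simp
    ring
  have hD : HasFDerivAt katoF (innerSL ℝ w) x := by
    have := h1.mul h2
    refine this.congr_fderiv ?_
    ext v
    simp [hwdef, PiLp.inner_apply, Fin.sum_univ_two, ha, hb, PiLp.toLp_apply]
    ring
  have hf : fderiv ℝ katoF x = innerSL ℝ w := hD.fderiv
  have hnorm : ‖fderiv ℝ katoF x‖ = ‖w‖ := by rw [hf, innerSL_apply_norm]
  have hwnorm : ‖w‖ ^ 2 = a ^ 2 + b ^ 2 := by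
    rw [← real_inner_self_eq_norm_sq]
    simp [hwdef, PiLp.inner_apply, Fin.sum_univ_two, PiLp.toLp_apply]
    rw [EuclideanSpace.norm_eq, Real.sq_sqrt (by positivity), Fin.sum_univ_two]
    simp only [PiLp.toLp_apply, Matrix.cons_val_zero, Matrix.cons_val_one, Real.norm_eq_abs]
    rw [sq_abs, sq_abs]
  have hsign : (SignType.sign (x 1) : ℝ) ^ 2 = 1 := by
    rcases lt_or_gt_of_ne hx with h | h <;> simp [h]
  have key : ‖fderiv ℝ katoF x‖ ^ 2 =
      ((x 0) ^ 2 + 1) + (x 0) ^ 2 * (x 1) ^ 2 / ((x 0) ^ 2 + 1) := by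
    rw [hnorm, hwnorm, ha, hb]
    have h1 : |x 1| ^ 2 = (x 1) ^ 2 := sq_abs _
    have h2 : Real.sqrt ((x 0)^2+1) ^ 2 = (x 0)^2 + 1 := Real.sq_sqrt hs.le
    field_simp
    have h4 : Real.sqrt ((x 0)^2+1) ^ 4 = ((x 0)^2 + 1) ^ 2 := by rw [show (4:ℕ) = 2*2 from rfl, pow_mul, h2]
    rw [h1, hsign, h4, h2]
    ring
  refine ⟨hD.differentiableAt, key, ?_⟩
  nlinarith [norm_nonneg (fderiv ℝ katoF x), sq_abs (x 0), abs_nonneg (x 0),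
    div_nonneg (by positivity : (0:ℝ) ≤ (x 0)^2 * (x 1)^2) hs.le]
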